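/- Let d ≥ 1 be an integer and γ ∈ (1,2]. Then there exists a constant C > 0 depending only on γ such that for every y ∈ ℝ^d, sup over x ∈ ℝ^d of |K̃(x,y)| ≤ C |y|^γ. -/

import Mathlib

open MeasureTheory

section Aux

/-- helper: `(a^2)^p = a^(2p)` for `a ≥ 0`. -/
lemma sq_rpow_aux {a : ℝ} (ha : 0 ≤ a) (p : ℝ) : (a ^ 2 : ℝ) ^ p = a ^ (2 * p) := by
  rw [← Real.rpow_natCast a 2, ← Real.rpow_mul ha]
  norm_num

/-- MVT bound for `t ↦ t^γ` on `[0, M]`, `γ ≥ 1`. -/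
lemma auxA {γ M : ℝ} (hγ : 1 ≤ γ) {a b : ℝ} (ha : a ∈ Set.Icc (0:ℝ) M)
    (hb : b ∈ Set.Icc (0:ℝ) M) :
    |a ^ γ - b ^ γ| ≤ γ * M ^ (γ - 1) * |a - b| := by
  have h := Convex.norm_image_sub_le_of_norm_hasDerivWithin_le
    (f := fun t : ℝ => t ^ γ) (f' := fun t : ℝ => γ * t ^ (γ - 1))
    (s := Set.Icc (0:ℝ) M) (C := γ * M ^ (γ - 1))
    (fun x _ => (Real.hasDerivAt_rpow_const (Or.inr hγ)).hasDerivWithinAt)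
    (fun x hx => by
      rw [Real.norm_eq_abs, abs_mul, abs_of_nonneg (by linarith : (0:ℝ) ≤ γ),
        abs_of_nonneg (Real.rpow_nonneg hx.1 _)]
      exact mul_le_mul_of_nonneg_left
        (Real.rpow_le_rpow hx.1 hx.2 (by linarith)) (by linarith))
    (convex_Icc 0 M) hb ha
  simpa [Real.norm_eq_abs] using h

/-- MVT bound for `t ↦ t^β` on `[m, ∞)`, `β ≤ 0 < m`. -/
lemma auxB {β m : ℝ} (hβ : β ≤ 0) (hm : 0 < m) {a b : ℝ} (ha : m ≤ a) (hb : m ≤ b) :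
    |a ^ β - b ^ β| ≤ |β| * m ^ (β - 1) * |a - b| := by
  have h := Convex.norm_image_sub_le_of_norm_hasDerivWithin_le
    (f := fun t : ℝ => t ^ β) (f' := fun t : ℝ => β * t ^ (β - 1))
    (s := Set.Ici m) (C := |β| * m ^ (β - 1))
    (fun x hx => (Real.hasDerivAt_rpow_const
      (Or.inl (lt_of_lt_of_le hm hx).ne')).hasDerivWithinAt)
    (fun x hx => by
      have hx' : m ≤ x := hx
      rw [Real.norm_eq_abs, abs_mul, abs_of_nonneg (Real.rpow_nonneg (by linarith) _)]
      exact mul_le_mul_of_nonneg_left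
        (Real.rpow_le_rpow_of_nonpos hm hx' (by linarith)) (abs_nonneg β))
    (convex_Ici m) hb ha
  simpa [Real.norm_eq_abs] using h

/-- second-order Taylor bound for `t ↦ t^g`, `0 < g ≤ 1`, on `[m, ∞)`. -/
lemma auxR {g m : ℝ} (hg0 : 0 < g) (hg1 : g ≤ 1) (hm : 0 < m) {u s : ℝ}
    (hu : m ≤ u) (hs : m ≤ s) :
    |s ^ g - u ^ g - g * u ^ (g - 1) * (s - u)| ≤
      g * (1 - g) * m ^ (g - 2) * (s - u) ^ 2 := by
  set lo := min s u with hlo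
  set hi := max s u with hhi
  have hmlo : m ≤ lo := le_min hs hu
  have hwidth : hi - lo = |s - u| := by
    rcases le_total s u with h | h
    · rw [hlo, hhi, min_eq_left h, max_eq_right h, abs_of_nonpos (by linarith)]; ring
    · rw [hlo, hhi, min_eq_right h, max_eq_left h, abs_of_nonneg (by linarith)]
  have husmem : u ∈ Set.Icc lo hi := ⟨min_le_right s u, le_max_right s u⟩
  have hssmem : s ∈ Set.Icc lo hi := ⟨min_le_left s u, le_max_left s u⟩
  have h := Convex.norm_image_sub_le_of_norm_hasDerivWithin_le
    (f := fun t : ℝ => t ^ g - g * u ^ (g - 1) * t)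
    (f' := fun t : ℝ => g * t ^ (g - 1) - g * u ^ (g - 1))
    (s := Set.Icc lo hi) (C := g * (1 - g) * m ^ (g - 2) * |s - u|)
    (fun x hx => by
      have hx0 : 0 < x := lt_of_lt_of_le hm (le_trans hmlo hx.1)
      have hd1 : HasDerivAt (fun t : ℝ => t ^ g) (g * x ^ (g - 1)) x :=
        Real.hasDerivAt_rpow_const (Or.inl hx0.ne')
      have hd2 : HasDerivAt (fun t : ℝ => g * u ^ (g - 1) * t) (g * u ^ (g - 1)) x := by
        simpa using (hasDerivAt_id x).const_mul (g * u ^ (g - 1))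
      exact (hd1.sub hd2).hasDerivWithinAt)
    (fun x hx => by
      have hx' : m ≤ x := le_trans hmlo hx.1
      have h1 : |x ^ (g - 1) - u ^ (g - 1)| ≤ |g - 1| * m ^ (g - 1 - 1) * |x - u| :=
        auxB (by linarith) hm hx' hu
      have h2 : |x - u| ≤ |s - u| := by
        rw [← hwidth]
        exact abs_le.mpr ⟨by linarith [hx.1, husmem.2], by linarith [hx.2, husmem.1]⟩
      have hg1' : |g - 1| = 1 - g := by rw [abs_of_nonpos (by linarith)]; ring
      have hmn : (0:ℝ) ≤ m ^ (g - 2) := Real.rpow_nonneg hm.le _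
      calc ‖g * x ^ (g - 1) - g * u ^ (g - 1)‖
          = g * |x ^ (g - 1) - u ^ (g - 1)| := by
            rw [Real.norm_eq_abs, ← mul_sub, abs_mul, abs_of_nonneg hg0.le]
        _ ≤ g * ((1 - g) * m ^ (g - 2) * |s - u|) := by
            apply mul_le_mul_of_nonneg_left _ hg0.le
            calc |x ^ (g - 1) - u ^ (g - 1)|
                ≤ (1 - g) * m ^ (g - 2) * |x - u| := by
                  rw [hg1'] at h1
                  have : g - 1 - 1 = g - 2 := by ring
                  rwa [this] at h1
              _ ≤ (1 - g) * m ^ (g - 2) * |s - u| := by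
                  apply mul_le_mul_of_nonneg_left h2
                  exact mul_nonneg (by linarith) (Real.rpow_nonneg hm.le _)
        _ = g * (1 - g) * m ^ (g - 2) * |s - u| := by ring)
    (convex_Icc lo hi) husmem hssmem
  have heq : (s ^ g - g * u ^ (g - 1) * s) - (u ^ g - g * u ^ (g - 1) * u)
      = s ^ g - u ^ g - g * u ^ (g - 1) * (s - u) := by ring
  rw [Real.norm_eq_abs, Real.norm_eq_abs, heq] at h
  calc |s ^ g - u ^ g - g * u ^ (g - 1) * (s - u)|
      ≤ g * (1 - g) * m ^ (g - 2) * |s - u| * |s - u| := h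
    _ = g * (1 - g) * m ^ (g - 2) * (s - u) ^ 2 := by
        rw [mul_assoc, ← abs_mul, ← sq, abs_of_nonneg (sq_nonneg _)]

set_option maxHeartbeats 1000000 in
/-- main scalar estimate. -/
lemma mainEst {γ : ℝ} (hγ1 : 1 < γ) (hγ2 : γ ≤ 2) {a b c t : ℝ}
    (ha : 0 ≤ a) (hb : 0 ≤ b) (hc : 0 ≤ c)
    (hcab : |c - a| ≤ b) (ht : |t| ≤ a * b)
    (hsq : c ^ 2 = a ^ 2 - 2 * t + b ^ 2) :
    |c ^ γ - a ^ γ + γ * a ^ (γ - 2) * t| ≤ 200 * b ^ γ := by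
  rcases eq_or_lt_of_le hb with hb0 | hb0
  · -- b = 0
    have hb0 : b = 0 := hb0.symm
    subst hb0
    have hca : c = a := by
      have := abs_le.mp hcab; linarith [this.1, this.2]
    have ht0 : t = 0 := by
      have := abs_le.mp ht
      have h1 : a * 0 = 0 := mul_zero a
      nlinarith [abs_nonneg t, le_abs_self t, neg_abs_le t]
    subst hca; subst ht0
    simp [Real.zero_rpow (by linarith : γ ≠ 0)]
  · -- b > 0
    have hbγ : (0:ℝ) ≤ b ^ γ := Real.rpow_nonneg hb _
    have habs : ∀ X Y : ℝ, |X + Y| ≤ |X| + |Y| := fun X Y => abs_add_le X Y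
    rcases le_or_gt a (2 * b) with hab | hab
    · -- case a ≤ 2b
      have hc3 : c ≤ 3 * b := by
        have := (abs_le.mp hcab).2; linarith
      have hA : |c ^ γ - a ^ γ| ≤ γ * (3 * b) ^ (γ - 1) * |c - a| :=
        auxA hγ1.le ⟨hc, hc3⟩ ⟨ha, by linarith⟩
      have h3b : (3 * b) ^ (γ - 1) ≤ 3 * b ^ (γ - 1) := by
        rw [Real.mul_rpow (by norm_num) hb]
        apply mul_le_mul_of_nonneg_right _ (Real.rpow_nonneg hb _)
        calc (3:ℝ) ^ (γ - 1) ≤ (3:ℝ) ^ (1:ℝ) :=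
              Real.rpow_le_rpow_of_exponent_le (by norm_num) (by linarith)
          _ = 3 := Real.rpow_one 3
      have hbg : b ^ (γ - 1) * b = b ^ γ := by
        rw [← Real.rpow_add_one hb0.ne']
        congr 1; ring
      have hT1 : |c ^ γ - a ^ γ| ≤ 3 * γ * b ^ γ := by
        calc |c ^ γ - a ^ γ| ≤ γ * (3 * b) ^ (γ - 1) * |c - a| := hA
          _ ≤ γ * (3 * b ^ (γ - 1)) * b := by
              apply mul_le_mul (mul_le_mul_of_nonneg_left h3b (by linarith)) hcab
                (abs_nonneg _) (by positivity)
          _ = 3 * γ * (b ^ (γ - 1) * b) := by ring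
          _ = 3 * γ * b ^ γ := by rw [hbg]
      have haa : a ^ (γ - 2) * a = a ^ (γ - 1) := by
        rcases eq_or_lt_of_le ha with ha0 | ha0
        · rw [← ha0, mul_zero,
            Real.zero_rpow (show γ - 1 ≠ 0 by intro h; linarith), ]
        · rw [← Real.rpow_add_one ha0.ne']
          congr 1; ring
      have ha2b : a ^ (γ - 1) ≤ 2 * b ^ (γ - 1) := by
        calc a ^ (γ - 1) ≤ (2 * b) ^ (γ - 1) :=
              Real.rpow_le_rpow ha hab (by linarith)
          _ ≤ 2 * b ^ (γ - 1) := by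
              rw [Real.mul_rpow (by norm_num) hb]
              apply mul_le_mul_of_nonneg_right _ (Real.rpow_nonneg hb _)
              calc (2:ℝ) ^ (γ - 1) ≤ (2:ℝ) ^ (1:ℝ) :=
                    Real.rpow_le_rpow_of_exponent_le (by norm_num) (by linarith)
                _ = 2 := Real.rpow_one 2
      have hT2 : |γ * a ^ (γ - 2) * t| ≤ 2 * γ * b ^ γ := by
        have hag : (0:ℝ) ≤ a ^ (γ - 2) := Real.rpow_nonneg ha _
        calc |γ * a ^ (γ - 2) * t| = γ * a ^ (γ - 2) * |t| := by
              rw [abs_mul, abs_mul, abs_of_nonneg (by linarith : (0:ℝ) ≤ γ),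
                abs_of_nonneg hag]
          _ ≤ γ * a ^ (γ - 2) * (a * b) := by
              apply mul_le_mul_of_nonneg_left ht (by positivity)
          _ = γ * (a ^ (γ - 2) * a) * b := by ring
          _ = γ * a ^ (γ - 1) * b := by rw [haa]
          _ ≤ γ * (2 * b ^ (γ - 1)) * b := by
              apply mul_le_mul_of_nonneg_right
                (mul_le_mul_of_nonneg_left ha2b (by linarith)) hb
          _ = 2 * γ * (b ^ (γ - 1) * b) := by ring
          _ = 2 * γ * b ^ γ := by rw [hbg]
      calc |c ^ γ - a ^ γ + γ * a ^ (γ - 2) * t|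
          ≤ |c ^ γ - a ^ γ| + |γ * a ^ (γ - 2) * t| := abs_add_le _ _
        _ ≤ 3 * γ * b ^ γ + 2 * γ * b ^ γ := add_le_add hT1 hT2
        _ ≤ 200 * b ^ γ := by nlinarith
    · -- case a > 2b
      have ha0 : 0 < a := by linarith
      set g := γ / 2 with hg
      have hg0 : 0 < g := by rw [hg]; linarith
      have hg1 : g ≤ 1 := by rw [hg]; linarith
      set m := a ^ 2 / 4 with hm
      have hm0 : 0 < m := by positivity
      set u := a ^ 2 with hu
      set s := c ^ 2 with hs
      have hum : m ≤ u := by rw [hm, hu]; nlinarith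
      have hca2 : a / 2 ≤ c := by
        have := (abs_le.mp hcab).1; linarith
      have hc32 : c ≤ 3 * a / 2 := by
        have := (abs_le.mp hcab).2; linarith
      have hsm : m ≤ s := by rw [hm, hs]; nlinarith
      -- rewrite rpow's
      have hgg : 2 * g = γ := by rw [hg]; ring
      have hgg2 : 2 * (g - 1) = γ - 2 := by rw [hg]; ring
      have hcγ : c ^ γ = s ^ g := by
        rw [hs, sq_rpow_aux hc g, hgg]
      have haγ : a ^ γ = u ^ g := by
        rw [hu, sq_rpow_aux ha g, hgg]
      have haγ2 : a ^ (γ - 2) = u ^ (g - 1) := by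
        rw [hu, sq_rpow_aux ha (g - 1), hgg2]
      have ht' : t = (u + b ^ 2 - s) / 2 := by rw [hu, hs]; linarith
      have hexpr : c ^ γ - a ^ γ + γ * a ^ (γ - 2) * t
          = (s ^ g - u ^ g - g * u ^ (g - 1) * (s - u)) + g * u ^ (g - 1) * b ^ 2 := by
        rw [hcγ, haγ, haγ2, ht', hg]; ring
      have hR := auxR hg0 hg1 hm0 hum hsm
      -- bound m ^ (g - 2)
      have hmg : m ^ (g - 2) ≤ 8 * a ^ (γ - 4) := by
        have h1 : m = (a / 2) ^ 2 := by rw [hm]; ring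
        have h2 : m ^ (g - 2) = (a / 2) ^ (2 * (g - 2)) := by
          rw [h1, sq_rpow_aux (by positivity) (g - 2)]
        have h3 : (2:ℝ) * (g - 2) = γ - 4 := by rw [hg]; ring
        rw [h2, h3]
        have h4 : (a / 2 : ℝ) = a * (1 / 2) := by ring
        rw [h4, Real.mul_rpow ha (by norm_num)]
        have h5 : ((1:ℝ) / 2) ^ (γ - 4) ≤ 8 := by
          rw [one_div, Real.inv_rpow (by norm_num : (0:ℝ) ≤ 2),
            ← Real.rpow_neg (by norm_num : (0:ℝ) ≤ 2)]
          calc (2:ℝ) ^ (-(γ - 4)) ≤ (2:ℝ) ^ (3:ℝ) :=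
                Real.rpow_le_rpow_of_exponent_le (by norm_num) (by linarith)
            _ = 8 := by
                rw [show (3:ℝ) = ((3:ℕ):ℝ) by norm_num, Real.rpow_natCast]; norm_num
        calc a ^ (γ - 4) * (1 / 2 : ℝ) ^ (γ - 4) ≤ a ^ (γ - 4) * 8 :=
              mul_le_mul_of_nonneg_left h5 (Real.rpow_nonneg ha _)
          _ = 8 * a ^ (γ - 4) := by ring
      -- bound (s - u)^2
      have hsu : (s - u) ^ 2 ≤ 7 * (a ^ 2 * b ^ 2) := by
        have h1 : (c - a) ^ 2 ≤ b ^ 2 := by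
          have h := abs_le.mp hcab
          nlinarith [h.1, h.2]
        have h2 : (c + a) ^ 2 ≤ 7 * a ^ 2 := by
          calc (c + a) ^ 2 ≤ (5 / 2 * a) ^ 2 := by
                apply sq_le_sq' <;> linarith
            _ ≤ 7 * a ^ 2 := by nlinarith [sq_nonneg a]
        have key : (s - u) ^ 2 = (c - a) ^ 2 * (c + a) ^ 2 := by rw [hs, hu]; ring
        calc (s - u) ^ 2 = (c - a) ^ 2 * (c + a) ^ 2 := key
          _ ≤ b ^ 2 * (7 * a ^ 2) :=
              mul_le_mul h1 h2 (sq_nonneg _) (sq_nonneg _)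
          _ = 7 * (a ^ 2 * b ^ 2) := by ring
      -- a-power collapse : a^(γ-4) * a^2 = a^(γ-2)
      have hpow : a ^ (γ - 4) * a ^ 2 = a ^ (γ - 2) := by
        rw [← Real.rpow_natCast a 2, ← Real.rpow_add ha0]
        congr 1; push_cast; ring
      have hab' : a ^ (γ - 2) ≤ b ^ (γ - 2) :=
        Real.rpow_le_rpow_of_nonpos hb0 (by linarith) (by linarith)
      have hbb : b ^ (γ - 2) * b ^ 2 = b ^ γ := by
        rw [← Real.rpow_natCast b 2, ← Real.rpow_add hb0]
        congr 1; push_cast; ring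
      have hRbound : |s ^ g - u ^ g - g * u ^ (g - 1) * (s - u)| ≤ 56 * b ^ γ := by
        calc |s ^ g - u ^ g - g * u ^ (g - 1) * (s - u)|
            ≤ g * (1 - g) * m ^ (g - 2) * (s - u) ^ 2 := hR
          _ ≤ 1 * (8 * a ^ (γ - 4)) * (7 * (a ^ 2 * b ^ 2)) := by
              apply mul_le_mul
              · apply mul_le_mul _ hmg (Real.rpow_nonneg hm0.le _) (by norm_num)
                nlinarith
              · exact hsu
              · positivity
              · positivity
          _ = 56 * ((a ^ (γ - 4) * a ^ 2) * b ^ 2) := by ring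
          _ = 56 * (a ^ (γ - 2) * b ^ 2) := by rw [hpow]
          _ ≤ 56 * (b ^ (γ - 2) * b ^ 2) := by
              apply mul_le_mul_of_nonneg_left
                (mul_le_mul_of_nonneg_right hab' (by positivity)) (by norm_num)
          _ = 56 * b ^ γ := by rw [hbb]
      have hT2 : g * u ^ (g - 1) * b ^ 2 ≤ b ^ γ := by
        have h1 : u ^ (g - 1) = a ^ (γ - 2) := haγ2.symm
        calc g * u ^ (g - 1) * b ^ 2 = g * (a ^ (γ - 2) * b ^ 2) := by rw [h1]; ring
          _ ≤ 1 * (b ^ (γ - 2) * b ^ 2) := by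
              apply mul_le_mul hg1
                (mul_le_mul_of_nonneg_right hab' (by positivity)) (by positivity)
                (by norm_num)
          _ = b ^ γ := by rw [one_mul, hbb]
      have hT2' : |g * u ^ (g - 1) * b ^ 2| ≤ b ^ γ := by
        rwa [abs_of_nonneg (by positivity : (0:ℝ) ≤ g * u ^ (g - 1) * b ^ 2)]
      calc |c ^ γ - a ^ γ + γ * a ^ (γ - 2) * t|
          = |(s ^ g - u ^ g - g * u ^ (g - 1) * (s - u)) + g * u ^ (g - 1) * b ^ 2| := by
            rw [hexpr]
        _ ≤ |s ^ g - u ^ g - g * u ^ (g - 1) * (s - u)| + |g * u ^ (g - 1) * b ^ 2| :=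
            abs_add_le _ _
        _ ≤ 56 * b ^ γ + b ^ γ := add_le_add hRbound hT2'
        _ ≤ 200 * b ^ γ := by linarith

end Aux

/-- `K̃(x,y) = |x−y|^γ − |x|^γ + γ |x|^{γ−2} (x·y)`, where the last term is
interpreted as `0` when `x = 0` (which is automatic for `Real.rpow` since `γ - 2 ≤ 0`). -/
noncomputable def Ktilde {d : ℕ} (γ : ℝ) (x y : EuclideanSpace ℝ (Fin d)) : ℝ :=
  ‖x - y‖ ^ γ - ‖x‖ ^ γ + γ * ‖x‖ ^ (γ - 2) * (inner ℝ x y : ℝ)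

theorem stmt_0 (d : ℕ) (hd : 1 ≤ d) (γ : ℝ) (hγ1 : 1 < γ) (hγ2 : γ ≤ 2) :
    ∃ C > (0 : ℝ), ∀ y x : EuclideanSpace ℝ (Fin d),
      |Ktilde γ x y| ≤ C * ‖y‖ ^ γ := by
  refine ⟨200, by norm_num, fun y x => ?_⟩
  have hcab : |‖x - y‖ - ‖x‖| ≤ ‖y‖ := by
    have h := abs_norm_sub_norm_le (x - y) x
    simpa using h
  have ht : |(inner ℝ x y : ℝ)| ≤ ‖x‖ * ‖y‖ := abs_real_inner_le_norm x y
  have hsq : ‖x - y‖ ^ 2 = ‖x‖ ^ 2 - 2 * (inner ℝ x y : ℝ) + ‖y‖ ^ 2 :=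
    norm_sub_sq_real x y
  have h := mainEst hγ1 hγ2 (norm_nonneg x) (norm_nonneg y) (norm_nonneg (x - y))
    hcab ht hsq
  simpa [Ktilde] using h
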